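/- The distillable work of a thermal channel is zero: if Ω is a thermal channel at inverse temperature β for Hamiltonian H, then W(Ω, H) = max_ρ [F(Ω(ρ)) − F(ρ)] = 0. -/

import Mathlib

open Matrix BigOperators Kronecker Filter
open scoped ComplexOrder
noncomputable section

/-- A density matrix: positive semidefinite with unit trace. -/
def IsDensityMatrix {n : Type*} [Fintype n] (ρ : Matrix n n ℂ) : Prop :=
  ρ.PosSemidef ∧ ρ.trace = 1

/-- Von Neumann entropy, defined through the eigenvalues of a Hermitian matrix. -/
def vnEntropy {n : Type*} [Fintype n] [DecidableEq n] (ρ : Matrix n n ℂ) : ℝ :=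
  if h : ρ.IsHermitian then -∑ i, (h.eigenvalues i) * Real.log (h.eigenvalues i) else 0

/-- Functional calculus: logarithm of a Hermitian matrix (0 otherwise). -/
def hermLog {n : Type*} [Fintype n] [DecidableEq n] (A : Matrix n n ℂ) : Matrix n n ℂ :=
  if h : A.IsHermitian then
    (h.eigenvectorUnitary : Matrix n n ℂ) *
      Matrix.diagonal (fun i => (Real.log (h.eigenvalues i) : ℂ)) *
      (star (h.eigenvectorUnitary : Matrix n n ℂ))
  else 0

/-- Functional calculus: exponential of a Hermitian matrix (0 otherwise). -/
def hermExp {n : Type*} [Fintype n] [DecidableEq n] (A : Matrix n n ℂ) : Matrix n n ℂ :=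
  if h : A.IsHermitian then
    (h.eigenvectorUnitary : Matrix n n ℂ) *
      Matrix.diagonal (fun i => (Real.exp (h.eigenvalues i) : ℂ)) *
      (star (h.eigenvectorUnitary : Matrix n n ℂ))
  else 0

/-- Quantum relative entropy D(ρ‖σ) = Tr(ρ log ρ) - Tr(ρ log σ). -/
def relEntropy {n : Type*} [Fintype n] [DecidableEq n] (ρ σ : Matrix n n ℂ) : ℝ :=
  ((ρ * hermLog ρ).trace - (ρ * hermLog σ).trace).re

/-- Gibbs (thermal) state at inverse temperature β. -/
def gibbs {n : Type*} [Fintype n] [DecidableEq n] (β : ℝ) (Hm : Matrix n n ℂ) : Matrix n n ℂ :=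
  (hermExp ((-β : ℂ) • Hm)).trace⁻¹ • hermExp ((-β : ℂ) • Hm)

/-- Choi matrix of a map on matrices. -/
def choiMatrix {n m : Type*} [Fintype n] [DecidableEq n] [Fintype m]
    (Φ : Matrix n n ℂ → Matrix m m ℂ) : Matrix (n × m) (n × m) ℂ :=
  fun p q => Φ (Matrix.single p.1 q.1 1) p.2 q.2

/-- A quantum channel: linear, completely positive (PSD Choi matrix), trace preserving. -/
def IsCPTP {n m : Type*} [Fintype n] [DecidableEq n] [Fintype m]
    (Φ : Matrix n n ℂ → Matrix m m ℂ) : Prop :=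
  (∀ (a : ℂ) (A B : Matrix n n ℂ), Φ (a • A + B) = a • Φ A + Φ B) ∧
  (choiMatrix Φ).PosSemidef ∧ (∀ A : Matrix n n ℂ, (Φ A).trace = A.trace)

/-- Tensor product of two channels, acting on bipartite matrices. -/
def tensorChan {n m : Type*} [Fintype n] [DecidableEq n] [Fintype m] [DecidableEq m]
    (Φ₁ : Matrix n n ℂ → Matrix n n ℂ) (Φ₂ : Matrix m m ℂ → Matrix m m ℂ)
    (A : Matrix (n × m) (n × m) ℂ) : Matrix (n × m) (n × m) ℂ :=
  fun p q => ∑ a, ∑ b, ∑ c, ∑ d, A (a, c) (b, d) *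
    (Φ₁ (Matrix.single a b 1)) p.1 q.1 * (Φ₂ (Matrix.single c d 1)) p.2 q.2

/-- Partial trace over the second factor. -/
def ptrace₂ {n m : Type*} [Fintype m] (ρ : Matrix (n × m) (n × m) ℂ) : Matrix n n ℂ :=
  fun i j => ∑ k, ρ (i, k) (j, k)

/-- Partial trace over the first factor. -/
def ptrace₁ {n m : Type*} [Fintype n] (ρ : Matrix (n × m) (n × m) ℂ) : Matrix m m ℂ :=
  fun k l => ∑ i, ρ (i, k) (i, l)

/-- Free energy F(ρ) = Tr(ρH) - kT S(ρ). -/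
def freeEnergy {n : Type*} [Fintype n] [DecidableEq n]
    (ρ Hm : Matrix n n ℂ) (kT : ℝ) : ℝ :=
  ((ρ * Hm).trace).re - kT * vnEntropy ρ

/-- Free energy difference ΔF(ρ, Ω) = F(Ω(ρ)) - F(ρ). -/
def deltaF {n : Type*} [Fintype n] [DecidableEq n]
    (Φ : Matrix n n ℂ → Matrix n n ℂ) (ρ Hm : Matrix n n ℂ) (kT : ℝ) : ℝ :=
  freeEnergy (Φ ρ) Hm kT - freeEnergy ρ Hm kT

/-- Distillable work W(Ω,H) = sup over density matrices ρ of ΔF(ρ, Ω). -/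
def distillableWork {n : Type*} [Fintype n] [DecidableEq n]
    (Φ : Matrix n n ℂ → Matrix n n ℂ) (Hm : Matrix n n ℂ) (kT : ℝ) : ℝ :=
  sSup { w | ∃ ρ, IsDensityMatrix ρ ∧ w = deltaF Φ ρ Hm kT }

/-- Marginal of a multipartite state at site `i`. -/
def marginal {ι : Type*} [Fintype ι] [DecidableEq ι] {H : ι → Type*}
    [∀ i, Fintype (H i)] [∀ i, DecidableEq (H i)]
    (σ : Matrix (∀ j, H j) (∀ j, H j) ℂ) (i : ι) : Matrix (H i) (H i) ℂ :=
  fun a b => ∑ f : ∀ j, H j, if f i = a then σ f (Function.update f i b) else 0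

/-- Tensor product of a family of channels, acting on a multipartite matrix. -/
def tensorChanPi {ι : Type*} [Fintype ι] [DecidableEq ι] {H : ι → Type*}
    [∀ i, Fintype (H i)] [∀ i, DecidableEq (H i)]
    (Φ : ∀ i, Matrix (H i) (H i) ℂ → Matrix (H i) (H i) ℂ)
    (σ : Matrix (∀ j, H j) (∀ j, H j) ℂ) : Matrix (∀ j, H j) (∀ j, H j) ℂ :=
  fun f g => ∑ F : ∀ j, H j, ∑ G : ∀ j, H j,
    σ F G * ∏ j, (Φ j (Matrix.single (F j) (G j) 1)) (f j) (g j)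

/-- Embedding of a single-site operator into a multipartite system. -/
def embedAt {ι : Type*} [Fintype ι] [DecidableEq ι] {H : ι → Type*}
    [∀ i, Fintype (H i)] [∀ i, DecidableEq (H i)]
    (i : ι) (A : Matrix (H i) (H i) ℂ) : Matrix (∀ j, H j) (∀ j, H j) ℂ :=
  fun f g => A (f i) (g i) * ∏ j ∈ Finset.univ.erase i, (if f j = g j then 1 else 0)

/-- Binary entropy. -/
def binEntropy (p : ℝ) : ℝ := -p * Real.log p - (1 - p) * Real.log (1 - p)

section Helpers
variable {m : Type*} [Fintype m] [DecidableEq m]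

variable {m : Type*} [Fintype m] [DecidableEq m]

lemma star_mul_self_of_unitary {U : Matrix m m ℂ} (hU : U ∈ Matrix.unitaryGroup m ℂ) :
    star U * U = 1 := hU.1

lemma mul_star_self_of_unitary {U : Matrix m m ℂ} (hU : U ∈ Matrix.unitaryGroup m ℂ) :
    U * star U = 1 := (Matrix.mem_unitaryGroup_iff.mp hU)

/-- Core intertwining: if `A = U D U⋆` then `W = E⋆U` intertwines the two diagonals. -/
lemma specW_intertwine {A : Matrix m m ℂ} (hA : A.IsHermitian)
    {U : Matrix m m ℂ} (hU : U ∈ Matrix.unitaryGroup m ℂ) (d : m → ℝ)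
    (hd : A = U * Matrix.diagonal (fun i => (d i : ℂ)) * star U) :
    Matrix.diagonal (fun i => (hA.eigenvalues i : ℂ)) *
      (star (hA.eigenvectorUnitary : Matrix m m ℂ) * U) =
    (star (hA.eigenvectorUnitary : Matrix m m ℂ) * U) *
      Matrix.diagonal (fun i => (d i : ℂ)) := by
  set E := (hA.eigenvectorUnitary : Matrix m m ℂ) with hE
  have hEu : E ∈ Matrix.unitaryGroup m ℂ := (hA.eigenvectorUnitary).2
  have hspec : E * Matrix.diagonal (fun i => (hA.eigenvalues i : ℂ)) * star E = A := by
    exact hA.spectral_theorem.symm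
  have key : E * Matrix.diagonal (fun i => (hA.eigenvalues i : ℂ)) * star E =
      U * Matrix.diagonal (fun i => (d i : ℂ)) * star U := by rw [hspec, hd]
  have e1 : star E * (E * Matrix.diagonal (fun i => (hA.eigenvalues i : ℂ)) * star E) * U =
      Matrix.diagonal (fun i => (hA.eigenvalues i : ℂ)) * (star E * U) := by
    have : star E * (E * Matrix.diagonal (fun i => (hA.eigenvalues i : ℂ)) * star E) * U =
        (star E * E) * Matrix.diagonal (fun i => (hA.eigenvalues i : ℂ)) * (star E * U) := by
      noncomm_ring
    rw [this, star_mul_self_of_unitary hEu, Matrix.one_mul]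
  have e2 : star E * (U * Matrix.diagonal (fun i => (d i : ℂ)) * star U) * U =
      (star E * U) * Matrix.diagonal (fun i => (d i : ℂ)) := by
    have : star E * (U * Matrix.diagonal (fun i => (d i : ℂ)) * star U) * U =
        (star E * U) * Matrix.diagonal (fun i => (d i : ℂ)) * (star U * U) := by noncomm_ring
    rw [this, star_mul_self_of_unitary hU, Matrix.mul_one]
  rw [← e1, key, e2]

lemma specW_entry {A : Matrix m m ℂ} (hA : A.IsHermitian)
    {U : Matrix m m ℂ} (hU : U ∈ Matrix.unitaryGroup m ℂ) (d : m → ℝ)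
    (hd : A = U * Matrix.diagonal (fun i => (d i : ℂ)) * star U) (i j : m) :
    (hA.eigenvalues i : ℂ) * (star (hA.eigenvectorUnitary : Matrix m m ℂ) * U) i j =
    (star (hA.eigenvectorUnitary : Matrix m m ℂ) * U) i j * (d j : ℂ) := by
  have := congrFun (congrFun (specW_intertwine hA hU d hd) i) j
  simpa [Matrix.diagonal_mul, Matrix.mul_diagonal, mul_comm] using this

lemma specW_eigen_eq {A : Matrix m m ℂ} (hA : A.IsHermitian)
    {U : Matrix m m ℂ} (hU : U ∈ Matrix.unitaryGroup m ℂ) (d : m → ℝ)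
    (hd : A = U * Matrix.diagonal (fun i => (d i : ℂ)) * star U) {i j : m}
    (h0 : (star (hA.eigenvectorUnitary : Matrix m m ℂ) * U) i j ≠ 0) :
    hA.eigenvalues i = d j := by
  have hij := specW_entry hA hU d hd i j
  rw [mul_comm ((star (hA.eigenvectorUnitary : Matrix m m ℂ) * U) i j) _] at hij
  have : (hA.eigenvalues i : ℂ) = (d j : ℂ) := mul_right_cancel₀ h0 hij
  exact_mod_cast this

/-- Functional calculus is independent of the chosen unitary diagonalization. -/
lemma hermFun_eq_of_decomp {A : Matrix m m ℂ} (hA : A.IsHermitian)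
    {U : Matrix m m ℂ} (hU : U ∈ Matrix.unitaryGroup m ℂ) (d : m → ℝ)
    (hd : A = U * Matrix.diagonal (fun i => (d i : ℂ)) * star U) (f : ℝ → ℝ) :
    (hA.eigenvectorUnitary : Matrix m m ℂ) *
      Matrix.diagonal (fun i => (f (hA.eigenvalues i) : ℂ)) *
      star (hA.eigenvectorUnitary : Matrix m m ℂ) =
    U * Matrix.diagonal (fun i => (f (d i) : ℂ)) * star U := by
  set E := (hA.eigenvectorUnitary : Matrix m m ℂ) with hE
  have hEu : E ∈ Matrix.unitaryGroup m ℂ := (hA.eigenvectorUnitary).2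
  have hW : Matrix.diagonal (fun i => (f (hA.eigenvalues i) : ℂ)) * (star E * U) =
      (star E * U) * Matrix.diagonal (fun i => (f (d i) : ℂ)) := by
    ext i j
    simp only [Matrix.diagonal_mul, Matrix.mul_diagonal]
    rcases eq_or_ne ((star E * U) i j) 0 with h0 | h0
    · rw [h0]; ring
    · rw [specW_eigen_eq hA hU d hd h0, mul_comm]
  calc E * Matrix.diagonal (fun i => (f (hA.eigenvalues i) : ℂ)) * star E
      = E * Matrix.diagonal (fun i => (f (hA.eigenvalues i) : ℂ)) * (star E * (U * star U)) := by
        rw [mul_star_self_of_unitary hU, Matrix.mul_one]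
    _ = E * (Matrix.diagonal (fun i => (f (hA.eigenvalues i) : ℂ)) * (star E * U)) * star U := by
        noncomm_ring
    _ = E * ((star E * U) * Matrix.diagonal (fun i => (f (d i) : ℂ))) * star U := by rw [hW]
    _ = (E * star E) * (U * Matrix.diagonal (fun i => (f (d i) : ℂ)) * star U) := by noncomm_ring
    _ = U * Matrix.diagonal (fun i => (f (d i) : ℂ)) * star U := by
        rw [mul_star_self_of_unitary hEu, Matrix.one_mul]

/-- Sum of a function over eigenvalues is decomposition-independent. -/
lemma specW_sum_eq {A : Matrix m m ℂ} (hA : A.IsHermitian)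
    {U : Matrix m m ℂ} (hU : U ∈ Matrix.unitaryGroup m ℂ) (d : m → ℝ)
    (hd : A = U * Matrix.diagonal (fun i => (d i : ℂ)) * star U) (g : ℝ → ℝ) :
    ∑ i, g (hA.eigenvalues i) = ∑ j, g (d j) := by
  set E := (hA.eigenvectorUnitary : Matrix m m ℂ) with hE
  have hEu : E ∈ Matrix.unitaryGroup m ℂ := (hA.eigenvectorUnitary).2
  set W := star E * U with hWdef
  have hWu : W ∈ Matrix.unitaryGroup m ℂ := mul_mem (Unitary.star_mem hEu) hU
  have hrow : ∀ i, ∑ j, Complex.normSq (W i j) = 1 := by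
    intro i
    have h1 := congrFun (congrFun (mul_star_self_of_unitary hWu) i) i
    have : (W * star W) i i = ∑ j, (W i j * star (W i j)) := by
      simp [Matrix.mul_apply, Matrix.star_apply]
    rw [this] at h1
    have := congrArg Complex.re h1
    simpa [Complex.mul_conj, Complex.normSq] using this
  have hcol : ∀ j, ∑ i, Complex.normSq (W i j) = 1 := by
    intro j
    have h1 := congrFun (congrFun (star_mul_self_of_unitary hWu) j) j
    have : (star W * W) j j = ∑ i, (star (W i j) * W i j) := by
      simp [Matrix.mul_apply, Matrix.star_apply]
    rw [this] at h1
    have := congrArg Complex.re h1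
    simpa [mul_comm, Complex.mul_conj, Complex.normSq] using this
  have hpt : ∀ i j, g (hA.eigenvalues i) * Complex.normSq (W i j)
      = g (d j) * Complex.normSq (W i j) := by
    intro i j
    rcases eq_or_ne (W i j) 0 with h0 | h0
    · simp [h0]
    · rw [specW_eigen_eq hA hU d hd h0]
  calc ∑ i, g (hA.eigenvalues i)
      = ∑ i, g (hA.eigenvalues i) * ∑ j, Complex.normSq (W i j) := by
        simp [hrow]
    _ = ∑ i, ∑ j, g (hA.eigenvalues i) * Complex.normSq (W i j) := by
        simp [Finset.mul_sum]
    _ = ∑ i, ∑ j, g (d j) * Complex.normSq (W i j) := by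
        congr 1; ext i; congr 1; ext j; exact hpt i j
    _ = ∑ j, g (d j) * ∑ i, Complex.normSq (W i j) := by
        rw [Finset.sum_comm]; simp [Finset.mul_sum]
    _ = ∑ j, g (d j) := by simp [hcol]


lemma conjdiag_isHermitian {U : Matrix m m ℂ} (c : m → ℝ) :
    (U * Matrix.diagonal (fun i => (c i : ℂ)) * star U).IsHermitian := by
  have hd : (Matrix.diagonal (fun i => (c i : ℂ))).IsHermitian := by
    apply Matrix.isHermitian_diagonal_iff.mpr
    intro i
    exact Complex.conj_ofReal _
  simpa [Matrix.star_eq_conjTranspose, Matrix.mul_assoc] using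
    Matrix.isHermitian_mul_mul_conjTranspose U hd

lemma conjdiag_posSemidef {U : Matrix m m ℂ} (c : m → ℝ) (hc : ∀ i, 0 ≤ c i) :
    (U * Matrix.diagonal (fun i => (c i : ℂ)) * star U).PosSemidef := by
  have hd : (Matrix.diagonal (fun i => (c i : ℂ))).PosSemidef := by
    apply Matrix.posSemidef_diagonal_iff.mpr
    intro i
    exact Complex.zero_le_real.mpr (hc i)
  simpa [Matrix.star_eq_conjTranspose] using hd.mul_mul_conjTranspose_same U

lemma trace_conjdiag {U : Matrix m m ℂ} (hU : U ∈ Matrix.unitaryGroup m ℂ) (c : m → ℂ) :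
    (U * Matrix.diagonal c * star U).trace = ∑ i, c i := by
  rw [Matrix.trace_mul_comm, ← Matrix.mul_assoc, star_mul_self_of_unitary hU, Matrix.one_mul,
    Matrix.trace_diagonal]

lemma conjdiag_mul_conjdiag {U : Matrix m m ℂ} (hU : U ∈ Matrix.unitaryGroup m ℂ) (c e : m → ℂ) :
    (U * Matrix.diagonal c * star U) * (U * Matrix.diagonal e * star U) =
      U * Matrix.diagonal (fun i => c i * e i) * star U := by
  have h : (U * Matrix.diagonal c * star U) * (U * Matrix.diagonal e * star U) =
      U * (Matrix.diagonal c * (star U * U) * Matrix.diagonal e) * star U := by noncomm_ring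
  rw [h, star_mul_self_of_unitary hU, Matrix.mul_one, Matrix.diagonal_mul_diagonal]

lemma spectral_decomp {A : Matrix m m ℂ} (hA : A.IsHermitian) :
    A = (hA.eigenvectorUnitary : Matrix m m ℂ) *
      Matrix.diagonal (fun i => (hA.eigenvalues i : ℂ)) *
      star (hA.eigenvectorUnitary : Matrix m m ℂ) := by
  exact hA.spectral_theorem

lemma hermLog_eq_of_decomp {A : Matrix m m ℂ} (hA : A.IsHermitian)
    {U : Matrix m m ℂ} (hU : U ∈ Matrix.unitaryGroup m ℂ) (d : m → ℝ)
    (hd : A = U * Matrix.diagonal (fun i => (d i : ℂ)) * star U) :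
    hermLog A = U * Matrix.diagonal (fun i => (Real.log (d i) : ℂ)) * star U := by
  rw [hermLog, dif_pos hA]
  exact hermFun_eq_of_decomp hA hU d hd Real.log

lemma hermExp_eq_of_decomp {A : Matrix m m ℂ} (hA : A.IsHermitian)
    {U : Matrix m m ℂ} (hU : U ∈ Matrix.unitaryGroup m ℂ) (d : m → ℝ)
    (hd : A = U * Matrix.diagonal (fun i => (d i : ℂ)) * star U) :
    hermExp A = U * Matrix.diagonal (fun i => (Real.exp (d i) : ℂ)) * star U := by
  rw [hermExp, dif_pos hA]
  exact hermFun_eq_of_decomp hA hU d hd Real.exp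

lemma vnEntropy_eq_of_decomp {A : Matrix m m ℂ} (hA : A.IsHermitian)
    {U : Matrix m m ℂ} (hU : U ∈ Matrix.unitaryGroup m ℂ) (d : m → ℝ)
    (hd : A = U * Matrix.diagonal (fun i => (d i : ℂ)) * star U) :
    vnEntropy A = -∑ i, d i * Real.log (d i) := by
  rw [vnEntropy, dif_pos hA]
  congr 1
  exact specW_sum_eq hA hU d hd (fun x => x * Real.log x)

/-- Cross trace formula between two conjugated diagonals. -/
lemma trace_conjdiag_mul_conjdiag {E U : Matrix m m ℂ}
    (hE : E ∈ Matrix.unitaryGroup m ℂ) (hU : U ∈ Matrix.unitaryGroup m ℂ) (p q : m → ℂ) :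
    ((E * Matrix.diagonal p * star E) * (U * Matrix.diagonal q * star U)).trace =
      ∑ i, ∑ j, p i * q j * (Complex.normSq ((star E * U) i j) : ℂ) := by
  have key : (E * Matrix.diagonal p * star E) * (U * Matrix.diagonal q * star U) * (E * star E) =
      E * (Matrix.diagonal p * (star E * U) * Matrix.diagonal q * (star U * E)) * star E := by
    noncomm_ring
  rw [mul_star_self_of_unitary hE, Matrix.mul_one] at key
  rw [key, Matrix.trace_mul_comm, ← Matrix.mul_assoc, star_mul_self_of_unitary hE,
    Matrix.one_mul]
  have hstar : star U * E = star (star E * U) := by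
    rw [Matrix.star_mul, star_star]
  rw [hstar]
  set W := star E * U with hW
  rw [show Matrix.diagonal p * W * Matrix.diagonal q * star W
      = Matrix.diagonal p * (W * Matrix.diagonal q * star W) by noncomm_ring]
  have hinner : ∀ i, (W * Matrix.diagonal q * star W) i i
      = ∑ j, W i j * q j * star (W i j) := by
    intro i
    simp [Matrix.mul_apply, Matrix.diagonal_apply, Matrix.star_apply, mul_ite, mul_zero,
      ite_mul, zero_mul, Finset.sum_ite_eq, Finset.sum_ite_eq']
  have houter : ∀ i, (Matrix.diagonal p * (W * Matrix.diagonal q * star W)) i i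
      = p i * (W * Matrix.diagonal q * star W) i i := by
    intro i
    simp [Matrix.diagonal_mul]
  rw [Matrix.trace]
  calc ∑ i, (Matrix.diagonal p * (W * Matrix.diagonal q * star W)).diag i
      = ∑ i, p i * ∑ j, W i j * q j * star (W i j) := by
        refine Finset.sum_congr rfl fun i _ => ?_
        rw [Matrix.diag_apply, houter, hinner]
    _ = ∑ i, ∑ j, p i * q j * (Complex.normSq (W i j) : ℂ) := by
        refine Finset.sum_congr rfl fun i _ => ?_
        rw [Finset.mul_sum]
        refine Finset.sum_congr rfl fun j _ => ?_
        rw [← Complex.mul_conj]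
        simp only [Matrix.star_apply, RCLike.star_def]
        ring

lemma unitary_row_normSq {W : Matrix m m ℂ} (hW : W ∈ Matrix.unitaryGroup m ℂ) (i : m) :
    ∑ j, Complex.normSq (W i j) = 1 := by
  have h1 := congrFun (congrFun (mul_star_self_of_unitary hW) i) i
  have h2 : (W * star W) i i = ∑ j, (W i j * star (W i j)) := by
    simp [Matrix.mul_apply, Matrix.star_apply]
  rw [h2] at h1
  have := congrArg Complex.re h1
  simpa [Complex.mul_conj, Complex.normSq] using this

lemma unitary_col_normSq {W : Matrix m m ℂ} (hW : W ∈ Matrix.unitaryGroup m ℂ) (j : m) :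
    ∑ i, Complex.normSq (W i j) = 1 := by
  have h1 := congrFun (congrFun (star_mul_self_of_unitary hW) j) j
  have h2 : (star W * W) j j = ∑ i, (star (W i j) * W i j) := by
    simp [Matrix.mul_apply, Matrix.star_apply]
  rw [h2] at h1
  have := congrArg Complex.re h1
  simpa [mul_comm, Complex.mul_conj, Complex.normSq] using this
section KronPtrace
variable {n a : Type*} [Fintype n] [DecidableEq n] [Fintype a] [DecidableEq a]

lemma star_kron (A : Matrix n n ℂ) (B : Matrix a a ℂ) :
    star (A ⊗ₖ B) = star A ⊗ₖ star B := by
  ext p q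
  simp [Matrix.star_apply, Matrix.kroneckerMap_apply, star_mul']

lemma kron_unitary {A : Matrix n n ℂ} {B : Matrix a a ℂ}
    (hA : A ∈ Matrix.unitaryGroup n ℂ) (hB : B ∈ Matrix.unitaryGroup a ℂ) :
    A ⊗ₖ B ∈ Matrix.unitaryGroup (n × a) ℂ := by
  constructor
  · rw [star_kron, ← Matrix.mul_kronecker_mul, star_mul_self_of_unitary hA,
      star_mul_self_of_unitary hB, Matrix.one_kronecker_one]
  · rw [star_kron, ← Matrix.mul_kronecker_mul, mul_star_self_of_unitary hA,
      mul_star_self_of_unitary hB, Matrix.one_kronecker_one]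

lemma conjdiag_kron {E : Matrix n n ℂ} {F : Matrix a a ℂ} (c : n → ℂ) (e : a → ℂ) :
    (E * Matrix.diagonal c * star E) ⊗ₖ (F * Matrix.diagonal e * star F) =
      (E ⊗ₖ F) * Matrix.diagonal (fun p : n × a => c p.1 * e p.2) * star (E ⊗ₖ F) := by
  rw [Matrix.mul_kronecker_mul, Matrix.mul_kronecker_mul, Matrix.diagonal_kronecker_diagonal,
    ← star_kron]

lemma ptrace₂_trace (σ : Matrix (n × a) (n × a) ℂ) : (ptrace₂ σ).trace = σ.trace := by
  simp [ptrace₂, Matrix.trace, Matrix.diag_apply, Fintype.sum_prod_type]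

lemma trace_mul_kron_one (σ : Matrix (n × a) (n × a) ℂ) (X : Matrix n n ℂ) :
    (σ * (X ⊗ₖ (1 : Matrix a a ℂ))).trace = (ptrace₂ σ * X).trace := by
  have lhs : (σ * (X ⊗ₖ (1 : Matrix a a ℂ))).trace
      = ∑ i : n, ∑ k : a, ∑ j : n, σ (i,k) (j,k) * X j i := by
    rw [Matrix.trace]
    simp only [Matrix.diag_apply, Matrix.mul_apply, Matrix.kroneckerMap_apply,
      Matrix.one_apply, Fintype.sum_prod_type, mul_ite, mul_one, mul_zero]
    refine Finset.sum_congr rfl fun i _ => ?_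
    refine Finset.sum_congr rfl fun k _ => ?_
    refine Finset.sum_congr rfl fun j _ => ?_
    rw [Finset.sum_ite_eq' Finset.univ k (fun l => σ (i,k) (j,l) * X j i)]
    simp
  have rhs : (ptrace₂ σ * X).trace = ∑ i : n, ∑ j : n, ∑ k : a, σ (i,k) (j,k) * X j i := by
    rw [Matrix.trace]
    simp only [Matrix.diag_apply, Matrix.mul_apply, ptrace₂, Finset.sum_mul]
  rw [lhs, rhs]
  refine Finset.sum_congr rfl fun i _ => ?_
  rw [Finset.sum_comm]

lemma trace_mul_one_kron (σ : Matrix (n × a) (n × a) ℂ) (X : Matrix a a ℂ) :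
    (σ * ((1 : Matrix n n ℂ) ⊗ₖ X)).trace = (ptrace₁ σ * X).trace := by
  have lhs : (σ * ((1 : Matrix n n ℂ) ⊗ₖ X)).trace
      = ∑ i : n, ∑ k : a, ∑ l : a, σ (i,k) (i,l) * X l k := by
    rw [Matrix.trace]
    simp only [Matrix.diag_apply, Matrix.mul_apply, Matrix.kroneckerMap_apply,
      Matrix.one_apply, Fintype.sum_prod_type, ite_mul, one_mul, zero_mul, mul_ite, mul_zero]
    refine Finset.sum_congr rfl fun i _ => ?_
    refine Finset.sum_congr rfl fun k _ => ?_
    rw [Finset.sum_comm]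
    simp
  have rhs : (ptrace₁ σ * X).trace = ∑ k : a, ∑ l : a, ∑ i : n, σ (i,k) (i,l) * X l k := by
    rw [Matrix.trace]
    simp only [Matrix.diag_apply, Matrix.mul_apply, ptrace₁, Finset.sum_mul]
  rw [lhs, rhs, Finset.sum_comm]
  refine Finset.sum_congr rfl fun k _ => ?_
  rw [Finset.sum_comm]

lemma ptrace₂_kron (A : Matrix n n ℂ) (B : Matrix a a ℂ) :
    ptrace₂ (A ⊗ₖ B) = B.trace • A := by
  ext i j
  simp only [ptrace₂, Matrix.kroneckerMap_apply, Matrix.trace, Matrix.diag_apply,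
    Matrix.smul_apply, smul_eq_mul]
  rw [Finset.sum_mul]
  exact Finset.sum_congr rfl fun _ _ => mul_comm _ _

lemma ptrace₂_smul (c : ℂ) (M : Matrix (n × a) (n × a) ℂ) :
    ptrace₂ (c • M) = c • ptrace₂ M := by
  ext i j
  simp [ptrace₂, Finset.mul_sum]

lemma ptrace₂_isHermitian {σ : Matrix (n × a) (n × a) ℂ} (hσ : σ.IsHermitian) :
    (ptrace₂ σ).IsHermitian := by
  ext i j
  simp only [Matrix.conjTranspose_apply, ptrace₂, Matrix.star_apply, star_sum]
  refine Finset.sum_congr rfl fun k _ => ?_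
  exact hσ.apply (i,k) (j,k)

/-- The "column embedded" vectors used for quadratic forms of the partial trace. -/
lemma ptrace₂_quadform (σ : Matrix (n × a) (n × a) ℂ) (v : n → ℂ) :
    star v ⬝ᵥ (ptrace₂ σ) *ᵥ v =
      ∑ k : a, star (fun p : n × a => v p.1 * (if p.2 = k then 1 else 0)) ⬝ᵥ
        σ *ᵥ (fun p : n × a => v p.1 * (if p.2 = k then 1 else 0)) := by
  have hk : ∀ k : a, star (fun p : n × a => v p.1 * (if p.2 = k then 1 else 0)) ⬝ᵥ
      σ *ᵥ (fun p : n × a => v p.1 * (if p.2 = k then 1 else 0))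
      = ∑ i : n, ∑ j : n, star (v i) * (σ (i,k) (j,k) * v j) := by
    intro k
    simp only [dotProduct, Matrix.mulVec, Pi.star_apply, Fintype.sum_prod_type,
      star_mul', apply_ite (star : ℂ → ℂ), star_one, star_zero, mul_ite, mul_one, mul_zero,
      ite_mul, zero_mul, Finset.sum_ite_eq', Finset.mem_univ, if_true]
    refine Finset.sum_congr rfl fun i _ => ?_
    rw [Finset.mul_sum]
  have hl : star v ⬝ᵥ (ptrace₂ σ) *ᵥ v
      = ∑ i : n, ∑ j : n, ∑ k : a, star (v i) * (σ (i,k) (j,k) * v j) := by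
    simp only [dotProduct, Matrix.mulVec, Pi.star_apply, ptrace₂]
    refine Finset.sum_congr rfl fun i _ => ?_
    rw [Finset.mul_sum]
    refine Finset.sum_congr rfl fun j _ => ?_
    rw [Finset.sum_mul, Finset.mul_sum]
  rw [hl]
  calc ∑ i : n, ∑ j : n, ∑ k : a, star (v i) * (σ (i,k) (j,k) * v j)
      = ∑ i : n, ∑ k : a, ∑ j : n, star (v i) * (σ (i,k) (j,k) * v j) :=
        Finset.sum_congr rfl fun i _ => Finset.sum_comm
    _ = ∑ k : a, ∑ i : n, ∑ j : n, star (v i) * (σ (i,k) (j,k) * v j) := Finset.sum_comm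
    _ = _ := Finset.sum_congr rfl fun k _ => (hk k).symm

lemma ptrace₂_posSemidef {σ : Matrix (n × a) (n × a) ℂ} (hσ : σ.PosSemidef) :
    (ptrace₂ σ).PosSemidef := by
  refine Matrix.PosSemidef.of_dotProduct_mulVec_nonneg (ptrace₂_isHermitian hσ.1) fun v => ?_
  rw [ptrace₂_quadform]
  exact Finset.sum_nonneg fun k _ => hσ.dotProduct_mulVec_nonneg _

/-- Kernel lemma: a vector in the kernel of the reduced state gives a kernel of the state. -/
lemma kernel_of_ptrace₂ {σ : Matrix (n × a) (n × a) ℂ} (hσ : σ.PosSemidef) (v : n → ℂ)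
    (hv : star v ⬝ᵥ (ptrace₂ σ) *ᵥ v = 0) (w : a → ℂ) :
    σ *ᵥ (fun p : n × a => v p.1 * w p.2) = 0 := by
  have hterm : ∀ k : a, σ *ᵥ (fun p : n × a => v p.1 * (if p.2 = k then 1 else 0)) = 0 := by
    intro k
    rw [← hσ.dotProduct_mulVec_zero_iff]
    have hsum := (ptrace₂_quadform σ v).symm.trans hv
    exact (Finset.sum_eq_zero_iff_of_nonneg (fun k _ => hσ.dotProduct_mulVec_nonneg _)).mp hsum k (Finset.mem_univ k)
  have hdecomp : (fun p : n × a => v p.1 * w p.2) =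
      ∑ k : a, w k • (fun p : n × a => v p.1 * (if p.2 = k then 1 else 0)) := by
    funext p
    simp only [Finset.sum_apply, Pi.smul_apply, smul_eq_mul, mul_ite, mul_one, mul_zero,
      Finset.sum_ite_eq, Finset.mem_univ, if_true]
    ring
  rw [hdecomp]
  have hsplit : σ *ᵥ (∑ k : a, w k • fun p : n × a => v p.1 * (if p.2 = k then 1 else 0))
      = ∑ k : a, σ *ᵥ (w k • fun p : n × a => v p.1 * (if p.2 = k then 1 else 0)) := by
    simpa only [Matrix.mulVecLin_apply] using map_sum σ.mulVecLin
      (fun k : a => w k • fun p : n × a => v p.1 * (if p.2 = k then 1 else 0)) Finset.univ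
  rw [hsplit]
  refine Finset.sum_eq_zero fun k _ => ?_
  rw [Matrix.mulVec_smul, hterm k]
  simp

end KronPtrace

section Klein
variable {m : Type*} [Fintype m] [DecidableEq m]

lemma klein_pointwise {p q w : ℝ} (hp : 0 ≤ p) (hq : 0 ≤ q) (hw : 0 ≤ w)
    (hsupp : q = 0 → p * w = 0) :
    w * p - w * q ≤ w * (p * Real.log p) - w * (p * Real.log q) := by
  rcases eq_or_lt_of_le hw with hw0 | hw0
  · simp [← hw0]
  rcases eq_or_lt_of_le hq with hq0 | hq0
  · have hp0 : p = 0 := by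
      have := hsupp hq0.symm
      rcases mul_eq_zero.mp this with h | h
      · exact h
      · exact absurd h hw0.ne'
    simp [hp0, ← hq0]
  rcases eq_or_lt_of_le hp with hp0 | hp0
  · simp [← hp0]
    positivity
  have key : p - q ≤ p * Real.log p - p * Real.log q := by
    have hlog := Real.log_le_sub_one_of_pos (show (0:ℝ) < q / p by positivity)
    rw [Real.log_div hq0.ne' hp0.ne'] at hlog
    have := mul_le_mul_of_nonneg_left hlog hp -- p * (log q - log p) ≤ p * (q/p - 1)
    have hqp : p * (q / p - 1) = q - p := by field_simp
    nlinarith [this]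
  calc w * p - w * q = w * (p - q) := by ring
    _ ≤ w * (p * Real.log p - p * Real.log q) := mul_le_mul_of_nonneg_left key hw
    _ = w * (p * Real.log p) - w * (p * Real.log q) := by ring

/-- Klein's inequality: nonnegativity of quantum relative entropy. -/
lemma klein_inequality (P : Matrix m m ℂ) (hP : P.PosSemidef) (hPtr : P.trace = 1)
    {U : Matrix m m ℂ} (hU : U ∈ Matrix.unitaryGroup m ℂ) (q : m → ℝ) (hq : ∀ j, 0 ≤ q j)
    (hqsum : ∑ j, q j = 1)
    (hsupp : ∀ j, q j = 0 → P *ᵥ (fun i => U i j) = 0) :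
    0 ≤ relEntropy P (U * Matrix.diagonal (fun j => (q j : ℂ)) * star U) := by
  have hPh : P.IsHermitian := hP.1
  set E : Matrix m m ℂ := (hPh.eigenvectorUnitary : Matrix m m ℂ) with hE
  set p : m → ℝ := hPh.eigenvalues with hp
  have hEu : E ∈ Matrix.unitaryGroup m ℂ := (hPh.eigenvectorUnitary).2
  have hPdec : P = E * Matrix.diagonal (fun i => (p i : ℂ)) * star E := spectral_decomp hPh
  have hQh : (U * Matrix.diagonal (fun j => (q j : ℂ)) * star U).IsHermitian :=
    conjdiag_isHermitian q
  set W : Matrix m m ℂ := star E * U with hW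
  have hWu : W ∈ Matrix.unitaryGroup m ℂ := mul_mem (Unitary.star_mem hEu) hU
  set w : m → m → ℝ := fun i j => Complex.normSq (W i j) with hwdef
  -- support condition transfer
  have hsupp' : ∀ j, q j = 0 → ∀ i, p i * w i j = 0 := by
    intro j hqj i
    have hcol : ∀ i', (P * U) i' j = 0 := by
      intro i'
      have := congrFun (hsupp j hqj) i'
      simpa [Matrix.mulVec, Matrix.mul_apply, dotProduct] using this
    have hkey : Matrix.diagonal (fun i => (p i : ℂ)) * W = star E * (P * U) := by
      rw [hPdec]
      have : star E * (E * Matrix.diagonal (fun i => (p i : ℂ)) * star E * U)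
          = (star E * E) * Matrix.diagonal (fun i => (p i : ℂ)) * (star E * U) := by
        noncomm_ring
      rw [this, star_mul_self_of_unitary hEu, Matrix.one_mul]
    have hzero : ((p i : ℂ)) * W i j = 0 := by
      have h1 : (Matrix.diagonal (fun i => (p i : ℂ)) * W) i j = (p i : ℂ) * W i j := by
        simp [Matrix.diagonal_mul]
      have h2 : (star E * (P * U)) i j = 0 := by
        rw [Matrix.mul_apply]
        exact Finset.sum_eq_zero fun k _ => by rw [hcol k, mul_zero]
      rw [← h1, hkey, h2]
    rcases mul_eq_zero.mp hzero with h | h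
    · have : p i = 0 := by exact_mod_cast h
      rw [this, zero_mul]
    · rw [hwdef]; simp [h]
  -- trace computations
  have hlogP : hermLog P = E * Matrix.diagonal (fun i => (Real.log (p i) : ℂ)) * star E :=
    hermLog_eq_of_decomp hPh hEu p hPdec
  have hlogQ : hermLog (U * Matrix.diagonal (fun j => (q j : ℂ)) * star U)
      = U * Matrix.diagonal (fun j => (Real.log (q j) : ℂ)) * star U :=
    hermLog_eq_of_decomp hQh hU q rfl
  have htr1 : ((P * hermLog P).trace).re = ∑ i, p i * Real.log (p i) := by
    rw [hlogP, hPdec, conjdiag_mul_conjdiag hEu, trace_conjdiag hEu]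
    push_cast
    simp
  have htr2 : ((P * hermLog (U * Matrix.diagonal (fun j => (q j : ℂ)) * star U)).trace).re
      = ∑ i, ∑ j, p i * Real.log (q j) * w i j := by
    rw [hlogQ, hPdec, trace_conjdiag_mul_conjdiag hEu hU]
    push_cast
    simp
    rfl
  rw [relEntropy, Complex.sub_re, htr1, htr2]
  -- eigenvalue facts
  have hpnn : ∀ i, 0 ≤ p i := hP.eigenvalues_nonneg
  have hpsum : ∑ i, p i = 1 := by
    have htr : P.trace = ∑ i, (p i : ℂ) := by
      rw [hPdec, trace_conjdiag hEu]
    rw [hPtr] at htr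
    have := congrArg Complex.re htr.symm
    simpa using this
  have hwnn : ∀ i j, 0 ≤ w i j := fun i j => Complex.normSq_nonneg _
  have hrow : ∀ i, ∑ j, w i j = 1 := fun i => unitary_row_normSq hWu i
  have hcol : ∀ j, ∑ i, w i j = 1 := fun j => unitary_col_normSq hWu j
  have step1 : ∑ i, p i * Real.log (p i) = ∑ i, ∑ j, w i j * (p i * Real.log (p i)) := by
    refine Finset.sum_congr rfl fun i _ => ?_
    rw [← Finset.sum_mul, hrow i, one_mul]
  have step2 : ∑ i, ∑ j, p i * Real.log (q j) * w i j
      = ∑ i, ∑ j, w i j * (p i * Real.log (q j)) := by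
    refine Finset.sum_congr rfl fun i _ => Finset.sum_congr rfl fun j _ => by ring
  rw [step1, step2]
  have hsum0 : ∑ i, ∑ j, (w i j * p i - w i j * q j) = 0 := by
    have h1 : ∑ i, ∑ j, w i j * p i = 1 := by
      have : ∀ i, ∑ j, w i j * p i = p i := by
        intro i
        rw [← Finset.sum_mul, hrow i, one_mul]
      rw [Finset.sum_congr rfl fun i _ => this i, hpsum]
    have h2 : ∑ i, ∑ j, w i j * q j = 1 := by
      rw [Finset.sum_comm]
      have : ∀ j, ∑ i, w i j * q j = q j := by
        intro j
        rw [← Finset.sum_mul, hcol j, one_mul]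
      rw [Finset.sum_congr rfl fun j _ => this j, hqsum]
    simp [Finset.sum_sub_distrib, h1, h2]
  have main : (0:ℝ) ≤ ∑ i, ∑ j,
      (w i j * (p i * Real.log (p i)) - w i j * (p i * Real.log (q j))) := by
    rw [← hsum0]
    refine Finset.sum_le_sum fun i _ => Finset.sum_le_sum fun j _ => ?_
    exact klein_pointwise (hpnn i) (hq j) (hwnn i j) (fun h => hsupp' j h i)
  have expand : ∑ i, ∑ j, (w i j * (p i * Real.log (p i)) - w i j * (p i * Real.log (q j)))
      = (∑ i, ∑ j, w i j * (p i * Real.log (p i)))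
        - ∑ i, ∑ j, w i j * (p i * Real.log (q j)) := by
    simp [Finset.sum_sub_distrib]
  linarith [main, expand]

end Klein

section Gibbs
variable {m : Type*} [Fintype m] [DecidableEq m] [Nonempty m]

/-- Partition function over a list of energies. -/
def gibbsZd (β : ℝ) (d : m → ℝ) : ℝ := ∑ i, Real.exp (-β * d i)

lemma gibbsZd_pos (β : ℝ) (d : m → ℝ) : 0 < gibbsZd β d :=
  Finset.sum_pos (fun i _ => Real.exp_pos _) Finset.univ_nonempty

lemma smul_conjdiag (c : ℂ) (U : Matrix m m ℂ) (v : m → ℂ) :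
    c • (U * Matrix.diagonal v * star U) = U * Matrix.diagonal (fun i => c * v i) * star U := by
  have h : c • Matrix.diagonal v = Matrix.diagonal (fun i => c * v i) := by
    ext i j
    by_cases h : i = j <;> simp [Matrix.diagonal_apply, h]
  rw [← h, ← Matrix.smul_mul, ← Matrix.mul_smul]

lemma neg_smul_decomp (β : ℝ) {U : Matrix m m ℂ} {d : m → ℝ} {B : Matrix m m ℂ}
    (hBdec : B = U * Matrix.diagonal (fun i => (d i : ℂ)) * star U) :
    (-β : ℂ) • B = U * Matrix.diagonal (fun i => ((-β * d i : ℝ) : ℂ)) * star U := by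
  rw [hBdec, smul_conjdiag]
  congr 1
  congr 1
  funext i
  push_cast
  ring

lemma hermExp_neg_smul (β : ℝ) {U : Matrix m m ℂ} (hUu : U ∈ Matrix.unitaryGroup m ℂ)
    {d : m → ℝ} {B : Matrix m m ℂ}
    (hBdec : B = U * Matrix.diagonal (fun i => (d i : ℂ)) * star U) :
    hermExp ((-β : ℂ) • B) =
      U * Matrix.diagonal (fun i => ((Real.exp (-β * d i) : ℝ) : ℂ)) * star U := by
  have hH : ((-β : ℂ) • B).IsHermitian := by
    rw [neg_smul_decomp β hBdec]; exact conjdiag_isHermitian _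
  exact hermExp_eq_of_decomp hH hUu _ (neg_smul_decomp β hBdec)

lemma hermExp_neg_smul_trace (β : ℝ) {U : Matrix m m ℂ} (hUu : U ∈ Matrix.unitaryGroup m ℂ)
    {d : m → ℝ} {B : Matrix m m ℂ}
    (hBdec : B = U * Matrix.diagonal (fun i => (d i : ℂ)) * star U) :
    (hermExp ((-β : ℂ) • B)).trace = ((gibbsZd β d : ℝ) : ℂ) := by
  rw [hermExp_neg_smul β hUu hBdec, trace_conjdiag hUu, gibbsZd]
  norm_cast

lemma gibbs_decomp (β : ℝ) {U : Matrix m m ℂ} (hUu : U ∈ Matrix.unitaryGroup m ℂ)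
    {d : m → ℝ} {B : Matrix m m ℂ}
    (hBdec : B = U * Matrix.diagonal (fun i => (d i : ℂ)) * star U) :
    gibbs β B =
      U * Matrix.diagonal (fun i => ((Real.exp (-β * d i) / gibbsZd β d : ℝ) : ℂ)) * star U := by
  rw [gibbs, hermExp_neg_smul_trace β hUu hBdec, hermExp_neg_smul β hUu hBdec, smul_conjdiag]
  simp only [Complex.ofReal_div, div_eq_inv_mul, Complex.ofReal_mul, Complex.ofReal_inv]

lemma gibbs_isHermitian (β : ℝ) {U : Matrix m m ℂ} (hUu : U ∈ Matrix.unitaryGroup m ℂ)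
    {d : m → ℝ} {B : Matrix m m ℂ}
    (hBdec : B = U * Matrix.diagonal (fun i => (d i : ℂ)) * star U) :
    (gibbs β B).IsHermitian := by
  rw [gibbs_decomp β hUu hBdec]; exact conjdiag_isHermitian _

lemma gibbs_posSemidef (β : ℝ) {U : Matrix m m ℂ} (hUu : U ∈ Matrix.unitaryGroup m ℂ)
    {d : m → ℝ} {B : Matrix m m ℂ}
    (hBdec : B = U * Matrix.diagonal (fun i => (d i : ℂ)) * star U) :
    (gibbs β B).PosSemidef := by
  rw [gibbs_decomp β hUu hBdec]
  exact conjdiag_posSemidef _ fun i => le_of_lt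
    (div_pos (Real.exp_pos _) (gibbsZd_pos β d))

lemma gibbs_t_sum (β : ℝ) (d : m → ℝ) :
    ∑ i, Real.exp (-β * d i) / gibbsZd β d = 1 := by
  rw [← Finset.sum_div]
  exact div_self (gibbsZd_pos β d).ne'

lemma gibbs_trace_one (β : ℝ) {U : Matrix m m ℂ} (hUu : U ∈ Matrix.unitaryGroup m ℂ)
    {d : m → ℝ} {B : Matrix m m ℂ}
    (hBdec : B = U * Matrix.diagonal (fun i => (d i : ℂ)) * star U) :
    (gibbs β B).trace = 1 := by
  rw [gibbs_decomp β hUu hBdec, trace_conjdiag hUu]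
  have := gibbs_t_sum β d
  norm_cast

lemma hermLog_gibbs (β : ℝ) {U : Matrix m m ℂ} (hUu : U ∈ Matrix.unitaryGroup m ℂ)
    {d : m → ℝ} {B : Matrix m m ℂ}
    (hBdec : B = U * Matrix.diagonal (fun i => (d i : ℂ)) * star U) :
    hermLog (gibbs β B) = (-β : ℂ) • B - ((Real.log (gibbsZd β d) : ℝ) : ℂ) • 1 := by
  rw [hermLog_eq_of_decomp (gibbs_isHermitian β hUu hBdec) hUu _ (gibbs_decomp β hUu hBdec)]
  have hdiag : (fun i => ((Real.log (Real.exp (-β * d i) / gibbsZd β d)) : ℂ)) =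
      fun i => ((-β * d i : ℝ) : ℂ) - ((Real.log (gibbsZd β d) : ℝ) : ℂ) := by
    funext i
    rw [Real.log_div (Real.exp_ne_zero _) (gibbsZd_pos β d).ne', Real.log_exp]
    push_cast
    ring
  rw [hdiag]
  have hsplit : Matrix.diagonal (fun i => ((-β * d i : ℝ) : ℂ)
      - ((Real.log (gibbsZd β d) : ℝ) : ℂ)) =
      Matrix.diagonal (fun i => ((-β * d i : ℝ) : ℂ))
      - ((Real.log (gibbsZd β d) : ℝ) : ℂ) • 1 := by
    ext i j
    by_cases h : i = j <;> simp [Matrix.diagonal_apply, Matrix.one_apply, h]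
  rw [hsplit, Matrix.mul_sub, Matrix.sub_mul, ← neg_smul_decomp β hBdec]
  congr 1
  rw [Matrix.mul_smul, Matrix.smul_mul, Matrix.mul_one, mul_star_self_of_unitary hUu]

lemma gibbs_free_identity (β : ℝ) {U : Matrix m m ℂ} (hUu : U ∈ Matrix.unitaryGroup m ℂ)
    {d : m → ℝ} {B : Matrix m m ℂ}
    (hBdec : B = U * Matrix.diagonal (fun i => (d i : ℂ)) * star U) :
    β * ((gibbs β B * B).trace).re = vnEntropy (gibbs β B) - Real.log (gibbsZd β d) := by
  set Z := gibbsZd β d with hZ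
  set t : m → ℝ := fun i => Real.exp (-β * d i) / Z with ht
  have htr : ((gibbs β B * B).trace).re = ∑ i, t i * d i := by
    conv_lhs => rw [gibbs_decomp β hUu hBdec]
    conv_lhs => rw [hBdec]
    rw [conjdiag_mul_conjdiag hUu, trace_conjdiag hUu]
    norm_cast
  have hent : vnEntropy (gibbs β B) = -∑ i, t i * Real.log (t i) :=
    vnEntropy_eq_of_decomp (gibbs_isHermitian β hUu hBdec) hUu _ (gibbs_decomp β hUu hBdec)
  have hlogt : ∀ i, Real.log (t i) = -β * d i - Real.log Z := by
    intro i
    rw [ht]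
    simp only []
    rw [Real.log_div (Real.exp_ne_zero _) (gibbsZd_pos β d).ne', Real.log_exp]
  have htsum : ∑ i, t i = 1 := gibbs_t_sum β d
  rw [htr, hent]
  have key : ∑ i, t i * Real.log (t i) = -β * (∑ i, t i * d i) - Real.log Z := by
    calc ∑ i, t i * Real.log (t i) = ∑ i, (-β * (t i * d i) - Real.log Z * t i) := by
          refine Finset.sum_congr rfl fun i _ => ?_
          rw [hlogt i]; ring
      _ = -β * (∑ i, t i * d i) - Real.log Z * ∑ i, t i := by
          rw [Finset.sum_sub_distrib, Finset.mul_sum, Finset.mul_sum]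
      _ = -β * (∑ i, t i * d i) - Real.log Z := by rw [htsum, mul_one]
  rw [key]
  ring

end Gibbs

section Misc
variable {m : Type*} [Fintype m] [DecidableEq m]

lemma conjdiag_add {U : Matrix m m ℂ} (c e : m → ℂ) :
    U * Matrix.diagonal c * star U + U * Matrix.diagonal e * star U =
      U * Matrix.diagonal (fun i => c i + e i) * star U := by
  have h : Matrix.diagonal (fun i => c i + e i) = Matrix.diagonal c + Matrix.diagonal e := by
    ext i j
    by_cases h : i = j <;> simp [Matrix.diagonal_apply, h]
  rw [h, Matrix.mul_add, Matrix.add_mul]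

lemma one_eq_conjdiag {U : Matrix m m ℂ} (hU : U ∈ Matrix.unitaryGroup m ℂ) :
    (1 : Matrix m m ℂ) = U * Matrix.diagonal (fun _ => ((1:ℝ):ℂ)) * star U := by
  have h : Matrix.diagonal (fun _ : m => ((1:ℝ):ℂ)) = 1 := by
    simp
  rw [h, Matrix.mul_one, mul_star_self_of_unitary hU]

/-- Trace against a conjugated diagonal supported on the kernel vanishes. -/
lemma trace_mul_kernel (σ : Matrix m m ℂ) (U : Matrix m m ℂ) (δ : m → ℂ)
    (h : ∀ j, δ j ≠ 0 → σ *ᵥ (fun i => U i j) = 0) :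
    (σ * (U * Matrix.diagonal δ * star U)).trace = 0 := by
  set K := U * Matrix.diagonal δ * star U with hKdef
  have hK : ∀ y x, K y x = ∑ j, U y j * δ j * star (U x j) := by
    intro y x
    rw [hKdef]
    simp [Matrix.mul_apply, Matrix.diagonal_apply, Matrix.star_apply, mul_ite, mul_zero,
      ite_mul, zero_mul, Finset.sum_ite_eq, Finset.sum_ite_eq']
  have htr : (σ * K).trace
      = ∑ x, ∑ y, ∑ j, σ x y * (U y j * δ j * star (U x j)) := by
    rw [Matrix.trace]
    simp only [Matrix.diag_apply, Matrix.mul_apply]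
    refine Finset.sum_congr rfl fun x _ => Finset.sum_congr rfl fun y _ => ?_
    rw [hK y x, Finset.mul_sum]
  rw [htr]
  calc ∑ x, ∑ y, ∑ j, σ x y * (U y j * δ j * star (U x j))
      = ∑ x, ∑ j, ∑ y, σ x y * (U y j * δ j * star (U x j)) :=
        Finset.sum_congr rfl fun x _ => Finset.sum_comm
    _ = ∑ j, ∑ x, ∑ y, σ x y * (U y j * δ j * star (U x j)) := Finset.sum_comm
    _ = 0 := by
        refine Finset.sum_eq_zero fun j _ => ?_
        rcases eq_or_ne (δ j) 0 with h0 | h0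
        · simp [h0]
        · have hz := h j h0
          have hz' : ∀ x, ∑ y, σ x y * U y j = 0 := by
            intro x
            have := congrFun hz x
            simpa [Matrix.mulVec, dotProduct] using this
          refine Finset.sum_eq_zero fun x _ => ?_
          calc ∑ y, σ x y * (U y j * δ j * star (U x j))
              = (δ j * star (U x j)) * ∑ y, σ x y * U y j := by
                rw [Finset.mul_sum]
                exact Finset.sum_congr rfl fun y _ => by ring
            _ = 0 := by rw [hz' x, mul_zero]

end Misc

section Misc2
variable {n a : Type*} [Fintype n] [Fintype a]

lemma ptrace₁_trace (σ : Matrix (n × a) (n × a) ℂ) : (ptrace₁ σ).trace = σ.trace := by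
  rw [Matrix.trace, Matrix.trace]
  simp only [Matrix.diag_apply, ptrace₁, Fintype.sum_prod_type]
  exact Finset.sum_comm

lemma sum_kron_entropy (r : n → ℝ) (t : a → ℝ)
    (hr : ∀ k, 0 ≤ r k) (ht : ∀ l, 0 < t l) (hrs : ∑ k, r k = 1) (hts : ∑ l, t l = 1) :
    ∑ p : n × a, (r p.1 * t p.2) * Real.log (r p.1 * t p.2)
      = (∑ k, r k * Real.log (r k)) + ∑ l, t l * Real.log (t l) := by
  have hterm : ∀ k l, (r k * t l) * Real.log (r k * t l)
      = t l * (r k * Real.log (r k)) + r k * (t l * Real.log (t l)) := by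
    intro k l
    rcases eq_or_lt_of_le (hr k) with h0 | h0
    · simp [← h0]
    · rw [Real.log_mul h0.ne' (ht l).ne']
      ring
  rw [Fintype.sum_prod_type]
  calc ∑ k, ∑ l, (r k * t l) * Real.log (r k * t l)
      = ∑ k, ∑ l, (t l * (r k * Real.log (r k)) + r k * (t l * Real.log (t l))) :=
        Finset.sum_congr rfl fun k _ => Finset.sum_congr rfl fun l _ => hterm k l
    _ = ∑ k, ((∑ l, t l) * (r k * Real.log (r k)) + r k * ∑ l, t l * Real.log (t l)) := by
        refine Finset.sum_congr rfl fun k _ => ?_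
        rw [Finset.sum_add_distrib, ← Finset.sum_mul, ← Finset.mul_sum]
    _ = ∑ k, ((r k * Real.log (r k)) + r k * ∑ l, t l * Real.log (t l)) := by
        simp only [hts, one_mul]
    _ = (∑ k, r k * Real.log (r k)) + (∑ k, r k) * ∑ l, t l * Real.log (t l) := by
        rw [Finset.sum_add_distrib, ← Finset.sum_mul]
    _ = _ := by rw [hrs, one_mul]


lemma re_sum_ofReal_mul {f g : n → ℝ} :
    (∑ i, ((f i : ℂ) * (g i : ℂ))).re = ∑ i, f i * g i := by
  have h : (∑ i, ((f i : ℂ) * (g i : ℂ))) = ((∑ i, f i * g i : ℝ) : ℂ) := by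
    push_cast
    rfl
  rw [h, Complex.ofReal_re]

end Misc2

end Helpers
set_option maxHeartbeats 2000000 in
/-- The distillable work of a thermal channel is zero. -/
theorem thermal_channel_distillableWork_zero
    {n a : Type*} [Fintype n] [DecidableEq n] [Nonempty n]
    [Fintype a] [DecidableEq a] [Nonempty a]
    (Hm : Matrix n n ℂ) (HA : Matrix a a ℂ)
    (hH : Hm.IsHermitian) (hHA : HA.IsHermitian)
    (β : ℝ) (hβ : 0 < β)
    (V : Matrix (n × a) (n × a) ℂ) (hV : V ∈ Matrix.unitaryGroup (n × a) ℂ)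
    (hcomm : V * (Hm ⊗ₖ (1 : Matrix a a ℂ) + (1 : Matrix n n ℂ) ⊗ₖ HA) =
      (Hm ⊗ₖ (1 : Matrix a a ℂ) + (1 : Matrix n n ℂ) ⊗ₖ HA) * V)
    (Φ : Matrix n n ℂ → Matrix n n ℂ)
    (hΦ : ∀ ρ, Φ ρ = ptrace₂ (V * (ρ ⊗ₖ gibbs β HA) * Vᴴ)) :
    distillableWork Φ Hm (1 / β) = 0 := by
  classical
  -- Spectral data for HA and Hm
  have hFu : ((hHA.eigenvectorUnitary : Matrix a a ℂ)) ∈ Matrix.unitaryGroup a ℂ :=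
    (hHA.eigenvectorUnitary).2
  set F : Matrix a a ℂ := (hHA.eigenvectorUnitary : Matrix a a ℂ) with hFdef
  set b : a → ℝ := hHA.eigenvalues with hbdef
  have hHAdec : HA = F * Matrix.diagonal (fun i => (b i : ℂ)) * star F := spectral_decomp hHA
  have hEu : ((hH.eigenvectorUnitary : Matrix n n ℂ)) ∈ Matrix.unitaryGroup n ℂ :=
    (hH.eigenvectorUnitary).2
  set E : Matrix n n ℂ := (hH.eigenvectorUnitary : Matrix n n ℂ) with hEdef
  set eH : n → ℝ := hH.eigenvalues with heHdef
  have hHdec : Hm = E * Matrix.diagonal (fun i => (eH i : ℂ)) * star E := spectral_decomp hH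
  -- thermal states
  set Za : ℝ := gibbsZd β b with hZadef
  set tA : a → ℝ := fun l => Real.exp (-β * b l) / Za with htAdef
  have htApos : ∀ l, 0 < tA l := fun l => div_pos (Real.exp_pos _) (gibbsZd_pos β b)
  have htAsum : ∑ l, tA l = 1 := gibbs_t_sum β b
  set τA : Matrix a a ℂ := gibbs β HA with hτAdef
  have hτAdec : τA = F * Matrix.diagonal (fun l => ((tA l : ℝ) : ℂ)) * star F := by
    rw [hτAdef]; exact gibbs_decomp β hFu hHAdec
  have hτAtr : τA.trace = 1 := by rw [hτAdef]; exact gibbs_trace_one β hFu hHAdec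
  set Zm : ℝ := gibbsZd β eH with hZmdef
  set tH : n → ℝ := fun k => Real.exp (-β * eH k) / Zm with htHdef
  set τ : Matrix n n ℂ := gibbs β Hm with hτdef
  have hτdec : τ = E * Matrix.diagonal (fun k => ((tH k : ℝ) : ℂ)) * star E := by
    rw [hτdef]; exact gibbs_decomp β hEu hHdec
  have hτdens : IsDensityMatrix τ := by
    rw [hτdef]
    exact ⟨gibbs_posSemidef β hEu hHdec, gibbs_trace_one β hEu hHdec⟩
  -- total Hamiltonian
  set G : Matrix (n × a) (n × a) ℂ := E ⊗ₖ F with hGdef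
  have hGu : G ∈ Matrix.unitaryGroup (n × a) ℂ := kron_unitary hEu hFu
  have hVGu : V * G ∈ Matrix.unitaryGroup (n × a) ℂ := mul_mem hV hGu
  set Htot : Matrix (n × a) (n × a) ℂ := Hm ⊗ₖ (1 : Matrix a a ℂ) + (1 : Matrix n n ℂ) ⊗ₖ HA
    with hHtotdef
  have hHtotdec : Htot = G * Matrix.diagonal (fun p : n × a => ((eH p.1 + b p.2 : ℝ) : ℂ)) *
      star G := by
    rw [hHtotdef]
    conv_lhs => rw [hHdec, hHAdec, one_eq_conjdiag hFu, one_eq_conjdiag hEu]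
    rw [conjdiag_kron, conjdiag_kron, hGdef, conjdiag_add]
    congr 1
    congr 1
    funext p
    push_cast
    ring
  have hVH : Vᴴ * Htot * V = Htot := by
    calc Vᴴ * Htot * V = Vᴴ * (Htot * V) := by rw [Matrix.mul_assoc]
      _ = Vᴴ * (V * Htot) := by rw [← hcomm]
      _ = (Vᴴ * V) * Htot := by rw [Matrix.mul_assoc]
      _ = Htot := by
          rw [← Matrix.star_eq_conjTranspose, star_mul_self_of_unitary hV, Matrix.one_mul]
  have hVH2 : V * Htot * Vᴴ = Htot := by
    calc V * Htot * Vᴴ = (Htot * V) * Vᴴ := by rw [hcomm]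
      _ = Htot * (V * Vᴴ) := by rw [Matrix.mul_assoc]
      _ = Htot := by
          rw [← Matrix.star_eq_conjTranspose, mul_star_self_of_unitary hV, Matrix.mul_one]
  have hHtotdec2 : Htot = (V * G) *
      Matrix.diagonal (fun p : n × a => ((eH p.1 + b p.2 : ℝ) : ℂ)) * star (V * G) := by
    have h1 : (V * G) * Matrix.diagonal (fun p : n × a => ((eH p.1 + b p.2 : ℝ) : ℂ)) *
        star (V * G) = V * (G * Matrix.diagonal
          (fun p : n × a => ((eH p.1 + b p.2 : ℝ) : ℂ)) * star G) * star V := by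
      rw [Matrix.star_mul]
      noncomm_ring
    rw [h1, ← hHtotdec, Matrix.star_eq_conjTranspose]
    exact hVH2.symm
  -- invariance of the exponential
  have hM1 := hermExp_neg_smul β hGu hHtotdec
  have hM2 := hermExp_neg_smul β hVGu hHtotdec2
  have hMinv : V * (G * Matrix.diagonal
      (fun p : n × a => ((Real.exp (-β * (eH p.1 + b p.2)) : ℝ) : ℂ)) * star G) * Vᴴ =
      G * Matrix.diagonal
      (fun p : n × a => ((Real.exp (-β * (eH p.1 + b p.2)) : ℝ) : ℂ)) * star G := by
    have h1 : V * (G * Matrix.diagonal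
        (fun p : n × a => ((Real.exp (-β * (eH p.1 + b p.2)) : ℝ) : ℂ)) * star G) * Vᴴ =
        (V * G) * Matrix.diagonal
        (fun p : n × a => ((Real.exp (-β * (eH p.1 + b p.2)) : ℝ) : ℂ)) * star (V * G) := by
      rw [Matrix.star_mul, Matrix.star_eq_conjTranspose]
      noncomm_ring
    rw [h1, ← hM2, hM1]
  -- the product Gibbs state
  have hkron : τ ⊗ₖ τA = G * Matrix.diagonal
      (fun p : n × a => ((tH p.1 * tA p.2 : ℝ) : ℂ)) * star G := by
    rw [hτdec, hτAdec, conjdiag_kron, hGdef]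
    simp only [Complex.ofReal_mul]
  have hq : ∀ p : n × a, tH p.1 * tA p.2 =
      (Zm * Za)⁻¹ * Real.exp (-β * (eH p.1 + b p.2)) := by
    intro p
    have h1 : Zm ≠ 0 := (gibbsZd_pos β eH).ne'
    have h2 : Za ≠ 0 := (gibbsZd_pos β b).ne'
    simp only [htHdef, htAdef]
    rw [show -β * (eH p.1 + b p.2) = (-β * eH p.1) + (-β * b p.2) by ring, Real.exp_add]
    field_simp
  have hsc : τ ⊗ₖ τA = (((Zm * Za)⁻¹ : ℝ) : ℂ) • (G * Matrix.diagonal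
      (fun p : n × a => ((Real.exp (-β * (eH p.1 + b p.2)) : ℝ) : ℂ)) * star G) := by
    rw [hkron, smul_conjdiag]
    have hfun : (fun p : n × a => ((tH p.1 * tA p.2 : ℝ) : ℂ)) =
        fun p : n × a => (((Zm * Za)⁻¹ : ℝ) : ℂ) *
          ((Real.exp (-β * (eH p.1 + b p.2)) : ℝ) : ℂ) := by
      funext p
      rw [hq p]
      push_cast
      ring
    rw [hfun]
  have hfix : Φ τ = τ := by
    have hVτ : V * (τ ⊗ₖ τA) * Vᴴ = τ ⊗ₖ τA := by
      rw [hsc, Matrix.mul_smul, Matrix.smul_mul, hMinv]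
    rw [hΦ τ, hVτ, ptrace₂_kron, hτAtr, one_smul]
  have hmem0 : (0:ℝ) ∈ {w | ∃ ρ, IsDensityMatrix ρ ∧ w = deltaF Φ ρ Hm (1/β)} :=
    ⟨τ, hτdens, by rw [deltaF, hfix, sub_self]⟩
  -- Part B: every achievable work is nonpositive
  have hub : ∀ w ∈ {w | ∃ ρ, IsDensityMatrix ρ ∧ w = deltaF Φ ρ Hm (1/β)}, w ≤ 0 := by
    rintro w ⟨ρ, hρ, rfl⟩
    have hρh : ρ.IsHermitian := hρ.1.1
    have hEρu : ((hρh.eigenvectorUnitary : Matrix n n ℂ)) ∈ Matrix.unitaryGroup n ℂ :=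
      (hρh.eigenvectorUnitary).2
    set Eρ : Matrix n n ℂ := (hρh.eigenvectorUnitary : Matrix n n ℂ) with hEρdef
    set r : n → ℝ := hρh.eigenvalues with hrdef
    have hρdec : ρ = Eρ * Matrix.diagonal (fun k => (r k : ℂ)) * star Eρ := spectral_decomp hρh
    have hrnn : ∀ k, 0 ≤ r k := hρ.1.eigenvalues_nonneg
    have hrsum : ∑ k, r k = 1 := by
      have htr : ρ.trace = ∑ k, ((r k : ℝ) : ℂ) := by
        conv_lhs => rw [hρdec]
        exact trace_conjdiag hEρu _
      rw [hρ.2] at htr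
      have := congrArg Complex.re htr.symm
      simpa using this
    set σp : Matrix (n × a) (n × a) ℂ := V * (ρ ⊗ₖ τA) * Vᴴ with hσpdef
    have hΦρ : Φ ρ = ptrace₂ σp := by rw [hΦ ρ, hσpdef]
    set Gρ : Matrix (n × a) (n × a) ℂ := Eρ ⊗ₖ F with hGρdef
    have hGρu : Gρ ∈ Matrix.unitaryGroup (n × a) ℂ := kron_unitary hEρu hFu
    have hVGρu : V * Gρ ∈ Matrix.unitaryGroup (n × a) ℂ := mul_mem hV hGρu
    have hsdec : ρ ⊗ₖ τA = Gρ * Matrix.diagonal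
        (fun p : n × a => ((r p.1 * tA p.2 : ℝ) : ℂ)) * star Gρ := by
      rw [hρdec, hτAdec, conjdiag_kron, hGρdef]
      simp only [Complex.ofReal_mul]
    have hσpdec : σp = (V * Gρ) * Matrix.diagonal
        (fun p : n × a => ((r p.1 * tA p.2 : ℝ) : ℂ)) * star (V * Gρ) := by
      rw [hσpdef, hsdec, Matrix.star_mul, ← Matrix.star_eq_conjTranspose]
      noncomm_ring
    have hσph : σp.IsHermitian := by rw [hσpdec]; exact conjdiag_isHermitian _
    have hsnn : ∀ p : n × a, 0 ≤ r p.1 * tA p.2 := fun p => mul_nonneg (hrnn _) (htApos _).le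
    have hσppsd : σp.PosSemidef := by rw [hσpdec]; exact conjdiag_posSemidef _ hsnn
    have hssum : ∑ p : n × a, r p.1 * tA p.2 = 1 := by
      rw [Fintype.sum_prod_type]
      calc ∑ k, ∑ l, r k * tA l = ∑ k, r k * ∑ l, tA l :=
            Finset.sum_congr rfl fun k _ => (Finset.mul_sum _ _ _).symm
        _ = 1 := by rw [htAsum]; simp [hrsum]
    have hσptr : σp.trace = 1 := by
      rw [hσpdec, trace_conjdiag hVGρu]
      norm_cast
    set ρ' : Matrix n n ℂ := ptrace₂ σp with hρ'def
    have hρ'psd : ρ'.PosSemidef := ptrace₂_posSemidef hσppsd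
    have hρ'h : ρ'.IsHermitian := hρ'psd.1
    have hρ'tr : ρ'.trace = 1 := by rw [hρ'def, ptrace₂_trace, hσptr]
    set τA' : Matrix a a ℂ := ptrace₁ σp with hτA'def
    have hτA'tr : τA'.trace = 1 := by rw [hτA'def, ptrace₁_trace, hσptr]
    have hEρ'u : ((hρ'h.eigenvectorUnitary : Matrix n n ℂ)) ∈ Matrix.unitaryGroup n ℂ :=
      (hρ'h.eigenvectorUnitary).2
    set Eρ' : Matrix n n ℂ := (hρ'h.eigenvectorUnitary : Matrix n n ℂ) with hEρ'def
    set r' : n → ℝ := hρ'h.eigenvalues with hr'def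
    have hρ'dec : ρ' = Eρ' * Matrix.diagonal (fun k => (r' k : ℂ)) * star Eρ' :=
      spectral_decomp hρ'h
    have hr'nn : ∀ k, 0 ≤ r' k := hρ'psd.eigenvalues_nonneg
    have hr'sum : ∑ k, r' k = 1 := by
      have htr : ρ'.trace = ∑ k, ((r' k : ℝ) : ℂ) := by
        conv_lhs => rw [hρ'dec]
        exact trace_conjdiag hEρ'u _
      rw [hρ'tr] at htr
      have := congrArg Complex.re htr.symm
      simpa using this
    set UQ : Matrix (n × a) (n × a) ℂ := Eρ' ⊗ₖ F with hUQdef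
    have hUQu : UQ ∈ Matrix.unitaryGroup (n × a) ℂ := kron_unitary hEρ'u hFu
    have hQdec : ρ' ⊗ₖ τA = UQ * Matrix.diagonal
        (fun p : n × a => ((r' p.1 * tA p.2 : ℝ) : ℂ)) * star UQ := by
      rw [hρ'dec, hτAdec, conjdiag_kron, hUQdef]
      simp only [Complex.ofReal_mul]
    have hqnn : ∀ p : n × a, 0 ≤ r' p.1 * tA p.2 := fun p => mul_nonneg (hr'nn _) (htApos _).le
    have hqsum : ∑ p : n × a, r' p.1 * tA p.2 = 1 := by
      rw [Fintype.sum_prod_type]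
      calc ∑ k, ∑ l, r' k * tA l = ∑ k, r' k * ∑ l, tA l :=
            Finset.sum_congr rfl fun k _ => (Finset.mul_sum _ _ _).symm
        _ = 1 := by rw [htAsum]; simp [hr'sum]
    -- support / kernel property
    have hker : ∀ k, r' k = 0 → ∀ wv : a → ℂ,
        σp *ᵥ (fun p : n × a => Eρ' p.1 k * wv p.2) = 0 := by
      intro k hk wv
      have hmulE : ρ' * Eρ' = Eρ' * Matrix.diagonal (fun k => (r' k : ℂ)) := by
        conv_lhs => rw [hρ'dec]
        calc Eρ' * Matrix.diagonal (fun k => (r' k : ℂ)) * star Eρ' * Eρ'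
            = Eρ' * Matrix.diagonal (fun k => (r' k : ℂ)) * (star Eρ' * Eρ') := by
              rw [Matrix.mul_assoc]
          _ = Eρ' * Matrix.diagonal (fun k => (r' k : ℂ)) := by
              rw [star_mul_self_of_unitary hEρ'u, Matrix.mul_one]
      have hvec : ρ' *ᵥ (fun i => Eρ' i k) = 0 := by
        have h1 : (ρ' *ᵥ (fun i => Eρ' i k)) = fun i => (ρ' * Eρ') i k := by
          funext i
          simp [Matrix.mulVec, dotProduct, Matrix.mul_apply]
        rw [h1, hmulE]
        funext i
        simp [Matrix.mul_diagonal, hk]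
      have hv : star (fun i => Eρ' i k) ⬝ᵥ (ptrace₂ σp) *ᵥ (fun i => Eρ' i k) = 0 := by
        rw [← hρ'def, hvec]
        simp [dotProduct]
      exact kernel_of_ptrace₂ hσppsd _ hv wv
    have hsupp : ∀ j : n × a, r' j.1 * tA j.2 = 0 → σp *ᵥ (fun i => UQ i j) = 0 := by
      intro j hqj
      have hrk : r' j.1 = 0 := by
        rcases mul_eq_zero.mp hqj with h | h
        · exact h
        · exact absurd h (htApos _).ne'
      have hcol : (fun i : n × a => UQ i j) = fun p : n × a => Eρ' p.1 j.1 * F p.2 j.2 := by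
        funext p
        rw [hUQdef]
        simp [Matrix.kroneckerMap_apply]
      rw [hcol]
      exact hker j.1 hrk _
    have hklein : 0 ≤ relEntropy σp (ρ' ⊗ₖ τA) := by
      have h := klein_inequality σp hσppsd hσptr hUQu
        (fun p : n × a => r' p.1 * tA p.2) hqnn hqsum hsupp
      rw [← hQdec] at h
      exact h
    -- entropy values
    have hSσp : vnEntropy σp
        = -∑ p : n × a, (r p.1 * tA p.2) * Real.log (r p.1 * tA p.2) :=
      vnEntropy_eq_of_decomp hσph hVGρu _ hσpdec
    have hSρ : vnEntropy ρ = -∑ k, r k * Real.log (r k) := by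
      rw [vnEntropy, dif_pos hρh]
    have hτAh : τA.IsHermitian := by rw [hτAdec]; exact conjdiag_isHermitian _
    have hSτA : vnEntropy τA = -∑ l, tA l * Real.log (tA l) :=
      vnEntropy_eq_of_decomp hτAh hFu _ hτAdec
    have hSρ' : vnEntropy ρ' = -∑ k, r' k * Real.log (r' k) := by
      rw [vnEntropy, dif_pos hρ'h]
    have hSsplit : vnEntropy σp = vnEntropy ρ + vnEntropy τA := by
      rw [hSσp, hSρ, hSτA, sum_kron_entropy r tA hrnn htApos hrsum htAsum]
      ring
    -- traces of logs
    have hlogσp := hermLog_eq_of_decomp hσph hVGρu _ hσpdec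
    have hRe1 : ((σp * hermLog σp).trace).re
        = ∑ p : n × a, (r p.1 * tA p.2) * Real.log (r p.1 * tA p.2) := by
      rw [hlogσp]
      conv_lhs => rw [hσpdec]
      rw [conjdiag_mul_conjdiag hVGρu, trace_conjdiag hVGρu]
      exact re_sum_ofReal_mul
    have hlogρ' := hermLog_eq_of_decomp hρ'h hEρ'u _ hρ'dec
    have hRe2 : ((ρ' * hermLog ρ').trace).re = ∑ k, r' k * Real.log (r' k) := by
      rw [hlogρ']
      conv_lhs => rw [hρ'dec]
      rw [conjdiag_mul_conjdiag hEρ'u, trace_conjdiag hEρ'u]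
      exact re_sum_ofReal_mul
    have hlogτA : hermLog τA = F * Matrix.diagonal
        (fun l => ((Real.log (tA l) : ℝ) : ℂ)) * star F :=
      hermLog_eq_of_decomp hτAh hFu _ hτAdec
    have hlogτAaff : hermLog τA = (-β : ℂ) • HA - ((Real.log Za : ℝ) : ℂ) • 1 := by
      rw [hτAdef]
      exact hermLog_gibbs β hFu hHAdec
    have hRe3 : ((τA' * hermLog τA).trace).re
        = -β * ((τA' * HA).trace).re - Real.log Za := by
      rw [hlogτAaff, Matrix.mul_sub, Matrix.trace_sub, Matrix.mul_smul, Matrix.trace_smul,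
        Matrix.mul_smul, Matrix.mul_one, Matrix.trace_smul, hτA'tr]
      simp [smul_eq_mul, Complex.sub_re, Complex.mul_re, Complex.neg_re, Complex.neg_im,
        Complex.ofReal_re, Complex.ofReal_im]
    -- hermLog of product state and correction
    have hkron1 : hermLog ρ' ⊗ₖ (1 : Matrix a a ℂ) = UQ * Matrix.diagonal
        (fun p : n × a => ((Real.log (r' p.1) : ℝ) : ℂ)) * star UQ := by
      rw [hlogρ', one_eq_conjdiag hFu, conjdiag_kron, hUQdef]
      simp only [Complex.ofReal_one, mul_one]
    have hkron2 : (1 : Matrix n n ℂ) ⊗ₖ hermLog τA = UQ * Matrix.diagonal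
        (fun p : n × a => ((Real.log (tA p.2) : ℝ) : ℂ)) * star UQ := by
      rw [hlogτA, one_eq_conjdiag hEρ'u, conjdiag_kron, hUQdef]
      simp only [Complex.ofReal_one, one_mul]
    have hQh : (ρ' ⊗ₖ τA).IsHermitian := by rw [hQdec]; exact conjdiag_isHermitian _
    have hlogQ := hermLog_eq_of_decomp hQh hUQu _ hQdec
    set δc : n × a → ℂ := fun p => ((Real.log (r' p.1 * tA p.2) : ℝ) : ℂ)
      - (((Real.log (r' p.1) : ℝ) : ℂ) + ((Real.log (tA p.2) : ℝ) : ℂ)) with hδdef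
    have hMM' : hermLog (ρ' ⊗ₖ τA) = (hermLog ρ' ⊗ₖ (1 : Matrix a a ℂ)
        + (1 : Matrix n n ℂ) ⊗ₖ hermLog τA) + UQ * Matrix.diagonal δc * star UQ := by
      rw [hlogQ, hkron1, hkron2, conjdiag_add, conjdiag_add]
      have hfe : (fun p : n × a => ((Real.log (r' p.1 * tA p.2) : ℝ) : ℂ)) =
          fun p : n × a => (((Real.log (r' p.1) : ℝ) : ℂ)
            + ((Real.log (tA p.2) : ℝ) : ℂ)) + δc p := by
        funext p
        rw [hδdef]
        ring
      rw [hfe]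
    have hδker : ∀ j : n × a, δc j ≠ 0 → σp *ᵥ (fun i => UQ i j) = 0 := by
      intro j hδj
      apply hsupp j
      by_contra hq0
      apply hδj
      have hrk : r' j.1 ≠ 0 := fun h => hq0 (by rw [h, zero_mul])
      rw [hδdef]
      simp only []
      rw [Real.log_mul hrk (htApos _).ne']
      push_cast
      ring
    have htrδ : (σp * (UQ * Matrix.diagonal δc * star UQ)).trace = 0 :=
      trace_mul_kernel σp UQ δc hδker
    have htrQ : (σp * hermLog (ρ' ⊗ₖ τA)).trace
        = (ρ' * hermLog ρ').trace + (τA' * hermLog τA).trace := by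
      rw [hMM', Matrix.mul_add, Matrix.mul_add, Matrix.trace_add, Matrix.trace_add, htrδ,
        add_zero]
      congr 1
      · rw [trace_mul_kron_one σp (hermLog ρ'), ← hρ'def]
      · rw [trace_mul_one_kron σp (hermLog τA), ← hτA'def]
    -- energy conservation
    have h1 : (σp * (Hm ⊗ₖ (1 : Matrix a a ℂ))).trace = (ρ' * Hm).trace := by
      rw [trace_mul_kron_one, ← hρ'def]
    have h2 : (σp * ((1 : Matrix n n ℂ) ⊗ₖ HA)).trace = (τA' * HA).trace := by
      rw [trace_mul_one_kron, ← hτA'def]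
    have h5 : (σp * Htot).trace = (σp * (Hm ⊗ₖ (1 : Matrix a a ℂ))).trace
        + (σp * ((1 : Matrix n n ℂ) ⊗ₖ HA)).trace := by
      rw [hHtotdef, Matrix.mul_add, Matrix.trace_add]
    have h3 : (σp * Htot).trace = ((ρ ⊗ₖ τA) * Htot).trace := by
      have hVH3 : Vᴴ * Htot * V = Htot := by
        calc Vᴴ * Htot * V = Vᴴ * (V * Htot) := by rw [Matrix.mul_assoc, ← hcomm]
          _ = (Vᴴ * V) * Htot := by rw [Matrix.mul_assoc]
          _ = Htot := by
              rw [← Matrix.star_eq_conjTranspose, star_mul_self_of_unitary hV, Matrix.one_mul]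
      calc (σp * Htot).trace
          = (V * ((ρ ⊗ₖ τA) * (Vᴴ * Htot))).trace := by
            rw [hσpdef, Matrix.mul_assoc, Matrix.mul_assoc]
        _ = (((ρ ⊗ₖ τA) * (Vᴴ * Htot)) * V).trace := Matrix.trace_mul_comm _ _
        _ = ((ρ ⊗ₖ τA) * (Vᴴ * Htot * V)).trace := by
            rw [Matrix.mul_assoc]
        _ = ((ρ ⊗ₖ τA) * Htot).trace := by rw [hVH3]
    have h4 : ((ρ ⊗ₖ τA) * Htot).trace = (ρ * Hm).trace + (τA * HA).trace := by
      rw [hHtotdef, Matrix.mul_add, Matrix.trace_add]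
      congr 1
      · rw [← Matrix.mul_kronecker_mul, Matrix.mul_one, Matrix.trace_kronecker, hτAtr, mul_one]
      · rw [← Matrix.mul_kronecker_mul, Matrix.mul_one, Matrix.trace_kronecker, hρ.2, one_mul]
    have hEcons : (ρ' * Hm).trace + (τA' * HA).trace = (ρ * Hm).trace + (τA * HA).trace := by
      rw [← h1, ← h2, ← h5, h3, h4]
    have hEconsRe : ((ρ' * Hm).trace).re + ((τA' * HA).trace).re
        = ((ρ * Hm).trace).re + ((τA * HA).trace).re := by
      have := congrArg Complex.re hEcons
      simpa [Complex.add_re] using this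
    have hfree : β * ((τA * HA).trace).re = vnEntropy τA - Real.log Za := by
      rw [hτAdef]
      exact gibbs_free_identity β hFu hHAdec
    -- value of the relative entropy
    have hRval : relEntropy σp (ρ' ⊗ₖ τA)
        = -vnEntropy σp + vnEntropy ρ' + β * ((τA' * HA).trace).re + Real.log Za := by
      rw [relEntropy, Complex.sub_re]
      have h6 := congrArg Complex.re htrQ
      rw [Complex.add_re] at h6
      rw [h6, hRe1, hRe2, hRe3, hSσp, hSρ']
      ring
    -- final inequality
    rw [deltaF, freeEnergy, freeEnergy, hΦρ]
    have hβne : β ≠ 0 := hβ.ne'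
    have hR0 : 0 ≤ -vnEntropy σp + vnEntropy ρ' + β * ((τA' * HA).trace).re + Real.log Za := by
      rw [← hRval]; exact hklein
    have hmul : 0 ≤ (1/β) * (-vnEntropy σp + vnEntropy ρ'
        + β * ((τA' * HA).trace).re + Real.log Za) :=
      mul_nonneg (by positivity) hR0
    have hexp : (1/β) * (-vnEntropy σp + vnEntropy ρ' + β * ((τA' * HA).trace).re + Real.log Za)
        = -((1/β) * vnEntropy σp) + (1/β) * vnEntropy ρ' + ((τA' * HA).trace).re
          + (1/β) * Real.log Za := by
      field_simp
    rw [hexp] at hmul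
    have hSmul : (1/β) * vnEntropy σp = (1/β) * vnEntropy ρ + (1/β) * vnEntropy τA := by
      rw [hSsplit]; ring
    have hB0 : ((τA * HA).trace).re = (1/β) * vnEntropy τA - (1/β) * Real.log Za := by
      field_simp
      linarith [hfree]
    linarith [hmul, hSmul, hB0, hEconsRe]
  -- conclusion
  rw [distillableWork]
  apply le_antisymm
  · exact Real.sSup_le hub le_rfl
  · exact le_csSup ⟨0, hub⟩ hmem0

end
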